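/- arXiv:2312.06937 — 4 statements merged into one kernel-verified Lean document; each statement's English description precedes it below -/
import Mathlib

section
/- Let z_0,…,z_N be points in ℝ^d with softmax weights α_i = exp(−β‖z_i − z_N‖²) / Σ_{j=0}^N exp(−β‖z_j − z_N‖²) for β > 0. Then the weighted average ẑ = Σ_{i=0}^N α_i z_i satisfies ‖ẑ − z_N‖ ≤ (N+1)/√(2eβ). -/
set_option maxHeartbeats 1000000

lemma exp_ge_e_mul (t : ℝ) : Real.exp 1 * t ≤ Real.exp t := by
  have h := Real.add_one_le_exp (t - 1)
  calc Real.exp 1 * t = Real.exp 1 * ((t - 1) + 1) := by ring_nf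
    _ ≤ Real.exp 1 * Real.exp (t - 1) := by
        nlinarith [Real.exp_pos (1 : ℝ)]
    _ = Real.exp t := by rw [← Real.exp_add]; ring_nf

lemma key_bound {β x : ℝ} (hβ : 0 < β) (hx : 0 ≤ x) :
    x * Real.exp (-β * x ^ 2) ≤ 1 / Real.sqrt (2 * Real.exp 1 * β) := by
  rcases eq_or_lt_of_le hx with h | hx
  · rw [← h, zero_mul]; positivity
  have hE : (0:ℝ) < Real.exp 1 := Real.exp_pos 1
  have hs : 0 < Real.sqrt (2 * Real.exp 1 * β) := Real.sqrt_pos.2 (by positivity)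
  -- exp(2βx²) ≥ e·2βx²
  have h1 : Real.exp 1 * (2 * β * x ^ 2) ≤ Real.exp (2 * β * x ^ 2) :=
    exp_ge_e_mul _
  have h2 : Real.exp (-β * x ^ 2) ^ 2 ≤ 1 / (2 * Real.exp 1 * β * x ^ 2) := by
    rw [sq, ← Real.exp_add, show -β * x ^ 2 + -β * x ^ 2 = -(2 * β * x ^ 2) by ring,
      Real.exp_neg, inv_eq_one_div]
    exact one_div_le_one_div_of_le (by positivity)
      (le_trans (le_of_eq (by ring)) h1)
  have h3 : Real.exp (-β * x ^ 2) ≤ 1 / (Real.sqrt (2 * Real.exp 1 * β) * x) := by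
    have := Real.sqrt_le_sqrt h2
    rwa [Real.sqrt_sq (Real.exp_pos _).le,
      show (1:ℝ) / (2 * Real.exp 1 * β * x ^ 2) = (1 / (Real.sqrt (2 * Real.exp 1 * β) * x))^2 by
        rw [div_pow, one_pow, mul_pow, Real.sq_sqrt (by positivity)],
      Real.sqrt_sq (by positivity)] at this
  calc x * Real.exp (-β * x ^ 2) ≤ x * (1 / (Real.sqrt (2 * Real.exp 1 * β) * x)) :=
        mul_le_mul_of_nonneg_left h3 hx.le
    _ = 1 / Real.sqrt (2 * Real.exp 1 * β) := by field_simp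
    _ ≤ 1 / Real.sqrt (2 * Real.exp 1 * β) := le_refl _

open Finset in
/-- Softmax-weighted averages with Gaussian weights centered at the query `z N`:
the weighted average is within `(N+1)/√(2eβ)` of `z N`. -/
theorem stmt1 {d : ℕ} (N : ℕ) (β : ℝ) (hβ : 0 < β)
    (z : ℕ → EuclideanSpace ℝ (Fin d)) :
    ‖(∑ i ∈ range (N + 1),
        (Real.exp (-β * ‖z i - z N‖ ^ 2) /
          ∑ j ∈ range (N + 1), Real.exp (-β * ‖z j - z N‖ ^ 2)) • z i) - z N‖ ≤
      (N + 1) / Real.sqrt (2 * Real.exp 1 * β) := by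
  set e : ℕ → ℝ := fun i => Real.exp (-β * ‖z i - z N‖ ^ 2) with he
  set S : ℝ := ∑ j ∈ range (N + 1), e j with hS
  have hS1 : 1 ≤ S := by
    have : e N = 1 := by simp [he]
    calc (1:ℝ) = e N := this.symm
      _ ≤ S := Finset.single_le_sum (f := e) (fun i _ => (Real.exp_pos _).le)
          (Finset.self_mem_range_succ N)
  have hS0 : (0:ℝ) < S := lt_of_lt_of_le one_pos hS1
  have hsum : ∑ i ∈ range (N + 1), e i / S = 1 := by
    rw [← Finset.sum_div, ← hS, div_self hS0.ne']
  have hvec : (∑ i ∈ range (N + 1), (e i / S) • z i) - z N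
      = ∑ i ∈ range (N + 1), (e i / S) • (z i - z N) := by
    simp only [smul_sub, Finset.sum_sub_distrib, ← Finset.sum_smul, hsum, one_smul]
  rw [hvec]
  calc ‖∑ i ∈ range (N + 1), (e i / S) • (z i - z N)‖
      ≤ ∑ i ∈ range (N + 1), ‖(e i / S) • (z i - z N)‖ := norm_sum_le _ _
    _ ≤ ∑ i ∈ range (N + 1), 1 / Real.sqrt (2 * Real.exp 1 * β) := by
        apply Finset.sum_le_sum
        intro i _
        rw [norm_smul, Real.norm_eq_abs, abs_of_pos (by positivity)]
        calc e i / S * ‖z i - z N‖ ≤ e i * ‖z i - z N‖ := by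
              apply mul_le_mul_of_nonneg_right _ (norm_nonneg _)
              calc e i / S ≤ e i / 1 := by
                    apply div_le_div_of_nonneg_left (Real.exp_pos _).le one_pos hS1
                _ = e i := div_one _
          _ = ‖z i - z N‖ * Real.exp (-β * ‖z i - z N‖ ^ 2) := mul_comm _ _
          _ ≤ 1 / Real.sqrt (2 * Real.exp 1 * β) := key_bound hβ (norm_nonneg _)
    _ = (N + 1) / Real.sqrt (2 * Real.exp 1 * β) := by
        rw [Finset.sum_const, Finset.card_range, nsmul_eq_mul]
        push_cast; ring
end

section
/- Let Σ ∈ ℝ^{d×d} be symmetric and W ∈ ℝ^{k×d}. Then there exist an embedding φ: ℝ^d → ℝ^{ℓ} with ℓ = 1 + d + d², a matrix A ∈ ℝ^{ℓ×ℓ}, and a matrix M ∈ ℝ^{k×ℓ} such that for all z_0,…,z_N, z ∈ ℝ^d, the Nadaraya–Watson estimator F(z_0,…,z_N; z) = [Σ_i exp(−(z−z_i)ᵀΣ(z−z_i)) W z_i] / [Σ_j exp(−(z−z_j)ᵀΣ(z−z_j))] equals the softmax self-attention output [Σ_i exp(φ(z)ᵀ A φ(z_i)) M φ(z_i)] / [Σ_j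 exp(φ(z)ᵀ A φ(z_j))]. -/
/-- The quadratic embedding `z ↦ (1, z, z ⊗ z)`. -/
def nwEmb {d : ℕ} (z : Fin d → ℝ) : Unit ⊕ Fin d ⊕ Fin d × Fin d → ℝ :=
  Sum.elim (fun _ => 1) (Sum.elim z (fun p => z p.1 * z p.2))

/-- The query/key matrix realizing the Gaussian kernel exponent. -/
def nwA {d : ℕ} (S : Matrix (Fin d) (Fin d) ℝ) :
    Matrix (Unit ⊕ Fin d ⊕ Fin d × Fin d) (Unit ⊕ Fin d ⊕ Fin d × Fin d) ℝ
  | .inl _, .inr (.inr p) => -S p.1 p.2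
  | .inr (.inr p), .inl _ => -S p.1 p.2
  | .inr (.inl a), .inr (.inl b) => 2 * S a b
  | _, _ => 0

/-- The value matrix extracting `W z` from the embedding. -/
def nwM {d k : ℕ} (W : Matrix (Fin k) (Fin d) ℝ) :
    Matrix (Fin k) (Unit ⊕ Fin d ⊕ Fin d × Fin d) ℝ
  | i, .inr (.inl b) => W i b
  | _, _ => 0

open Matrix Finset in
lemma nwExp {d : ℕ} (S : Matrix (Fin d) (Fin d) ℝ) (hS : S.IsSymm) (x y : Fin d → ℝ) :
    nwEmb x ⬝ᵥ nwA S *ᵥ nwEmb y = -((x - y) ⬝ᵥ S *ᵥ (x - y)) := by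
  have hcross : y ⬝ᵥ S *ᵥ x = x ⬝ᵥ S *ᵥ y := by
    rw [dotProduct_mulVec, ← mulVec_transpose, hS.eq, dotProduct_comm]
  have hrhs : (x - y) ⬝ᵥ S *ᵥ (x - y)
      = x ⬝ᵥ S *ᵥ x - 2 * (x ⬝ᵥ S *ᵥ y) + y ⬝ᵥ S *ᵥ y := by
    rw [sub_dotProduct, mulVec_sub, dotProduct_sub, dotProduct_sub, hcross]
    ring
  have hlhs : nwEmb x ⬝ᵥ nwA S *ᵥ nwEmb y
      = -(x ⬝ᵥ S *ᵥ x) + 2 * (x ⬝ᵥ S *ᵥ y) - y ⬝ᵥ S *ᵥ y := by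
    simp only [dotProduct, mulVec, nwEmb, nwA, Fintype.sum_sum_type, Fintype.sum_prod_type,
      Sum.elim_inl, Sum.elim_inr, zero_mul, mul_zero, Finset.sum_const_zero, add_zero,
      zero_add, mul_one, one_mul, Finset.sum_const, Finset.card_univ, Fintype.card_unit,
      one_smul, smul_eq_mul, Finset.mul_sum, neg_mul, Finset.sum_neg_distrib]
    ring_nf
    simp only [mul_comm, mul_left_comm, mul_assoc]
    ring_nf
    simp only [Finset.sum_neg_distrib]
    ring
  rw [hlhs, hrhs]
  ring

open Matrix Finset in
lemma nwMv {d k : ℕ} (W : Matrix (Fin k) (Fin d) ℝ) (y : Fin d → ℝ) :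
    nwM W *ᵥ nwEmb y = W *ᵥ y := by
  funext i
  simp [nwM, nwEmb, mulVec, dotProduct, Fintype.sum_sum_type]

open Matrix Finset in
/-- The Nadaraya–Watson estimator with Gaussian kernel `Σ` and value map `W` can be
represented exactly by a softmax self-attention block: there are an embedding
`φ : ℝ^d → ℝ^ℓ` with `ℓ = 1 + d + d²` (indexed by `Unit ⊕ Fin d ⊕ Fin d × Fin d`),
a query/key matrix `A` and a value matrix `M` realizing `F` for every token sequence. -/
theorem stmt4 {d k : ℕ} (S : Matrix (Fin d) (Fin d) ℝ) (hS : S.IsSymm)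
    (W : Matrix (Fin k) (Fin d) ℝ) :
    ∃ (φ : (Fin d → ℝ) → (Unit ⊕ Fin d ⊕ Fin d × Fin d) → ℝ)
      (A : Matrix (Unit ⊕ Fin d ⊕ Fin d × Fin d) (Unit ⊕ Fin d ⊕ Fin d × Fin d) ℝ)
      (M : Matrix (Fin k) (Unit ⊕ Fin d ⊕ Fin d × Fin d) ℝ),
      ∀ (N : ℕ) (z : ℕ → Fin d → ℝ) (zq : Fin d → ℝ),
        (∑ j ∈ range (N + 1),
            Real.exp (-((zq - z j) ⬝ᵥ S *ᵥ (zq - z j))))⁻¹ •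
          (∑ i ∈ range (N + 1),
            Real.exp (-((zq - z i) ⬝ᵥ S *ᵥ (zq - z i))) • (W *ᵥ z i)) =
        (∑ j ∈ range (N + 1),
            Real.exp (φ zq ⬝ᵥ A *ᵥ φ (z j)))⁻¹ •
          (∑ i ∈ range (N + 1),
            Real.exp (φ zq ⬝ᵥ A *ᵥ φ (z i)) • (M *ᵥ φ (z i))) := by
  refine ⟨nwEmb, nwA S, nwM W, fun N z zq => ?_⟩
  simp only [nwExp S hS, nwMv]
end

section
/- Consider two sequences x̂_t and x̂*_t in ℝ^n satisfying x̂*_t = F x̂*_{t−1} + L y_{t−1} and x̂_t = x̃_t + e_t where x̃_t = F x̂_{t−1} + L y_{t−1}, with x̂_0 = x̂*_0 and ‖e_t‖ ≤ ε₁ for all t ≥ 1. If F = MθM^{−1} with ‖θ‖ < 1 and κ = ‖M‖‖M^{−1}‖, then for all t ≥ 0, ‖x̂_t − x̂*_t‖ ≤ κ ε₁ / (1 − ‖θ‖). -/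
/-- Error propagation for a stable linear filter recursion: if `x̂*` follows the exact
recursion `x̂*_t = F x̂*_{t−1} + L y_{t−1}`, and `x̂` follows the same recursion up to an
additive error `e_t` of norm at most `ε₁`, with matching initialization and
`F = M θ M⁻¹`, `‖θ‖ < 1`, then `‖x̂_t − x̂*_t‖ ≤ κ ε₁/(1 − ‖θ‖)` for all `t`. -/
theorem stmt7 {n p : ℕ} (F : EuclideanSpace ℝ (Fin n) →L[ℝ] EuclideanSpace ℝ (Fin n))
    (L : EuclideanSpace ℝ (Fin p) →L[ℝ] EuclideanSpace ℝ (Fin n))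
    (M : EuclideanSpace ℝ (Fin n) ≃L[ℝ] EuclideanSpace ℝ (Fin n))
    (θ : EuclideanSpace ℝ (Fin n) →L[ℝ] EuclideanSpace ℝ (Fin n))
    (hF : F = (M : EuclideanSpace ℝ (Fin n) →L[ℝ] EuclideanSpace ℝ (Fin n)).comp
        (θ.comp (M.symm : EuclideanSpace ℝ (Fin n) →L[ℝ] EuclideanSpace ℝ (Fin n))))
    (hθ : ‖θ‖ < 1)
    (κ : ℝ)
    (hκ : κ = ‖(M : EuclideanSpace ℝ (Fin n) →L[ℝ] EuclideanSpace ℝ (Fin n))‖ *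
        ‖(M.symm : EuclideanSpace ℝ (Fin n) →L[ℝ] EuclideanSpace ℝ (Fin n))‖)
    (ε₁ : ℝ) (hε₁ : 0 < ε₁)
    (y : ℕ → EuclideanSpace ℝ (Fin p))
    (xhat xstar xtilde : ℕ → EuclideanSpace ℝ (Fin n))
    (e : ℕ → EuclideanSpace ℝ (Fin n))
    (h0 : xhat 0 = xstar 0)
    (hstar : ∀ t, 1 ≤ t → xstar t = F (xstar (t - 1)) + L (y (t - 1)))
    (htilde : ∀ t, 1 ≤ t → xtilde t = F (xhat (t - 1)) + L (y (t - 1)))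
    (hhat : ∀ t, 1 ≤ t → xhat t = xtilde t + e t)
    (he : ∀ t, 1 ≤ t → ‖e t‖ ≤ ε₁) :
    ∀ t : ℕ, ‖xhat t - xstar t‖ ≤ κ * ε₁ / (1 - ‖θ‖) := by

  have hθ0 : (0:ℝ) < 1 - ‖θ‖ := by linarith
  set Mi := (M.symm : EuclideanSpace ℝ (Fin n) →L[ℝ] EuclideanSpace ℝ (Fin n)) with hMi
  set Mc := (M : EuclideanSpace ℝ (Fin n) →L[ℝ] EuclideanSpace ℝ (Fin n)) with hMc
  set C : ℝ := ‖Mi‖ * ε₁ / (1 - ‖θ‖) with hC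
  have hCnn : 0 ≤ C := by
    apply div_nonneg (mul_nonneg (norm_nonneg _) hε₁.le) hθ0.le
  have key : ∀ t, ‖Mi (xhat t - xstar t)‖ ≤ C := by
    intro t
    induction t with
    | zero =>
      simp [h0, hCnn]
    | succ t ih =>
      have hd : xhat (t+1) - xstar (t+1) = F (xhat t - xstar t) + e (t+1) := by
        rw [hhat (t+1) (by omega), htilde (t+1) (by omega), hstar (t+1) (by omega)]
        simp only [Nat.add_sub_cancel, map_sub]
        abel
      have hMF : ∀ v, Mi (F v) = θ (Mi v) := by
        intro v
        simp [hF, hMi, hMc]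
      calc ‖Mi (xhat (t+1) - xstar (t+1))‖
          = ‖θ (Mi (xhat t - xstar t)) + Mi (e (t+1))‖ := by rw [hd, map_add, hMF]
        _ ≤ ‖θ (Mi (xhat t - xstar t))‖ + ‖Mi (e (t+1))‖ := norm_add_le _ _
        _ ≤ ‖θ‖ * C + ‖Mi‖ * ε₁ := by
            gcongr
            · exact le_trans (θ.le_opNorm _) (by
                have := θ.le_opNorm (Mi (xhat t - xstar t))
                nlinarith [norm_nonneg θ])
            · exact le_trans (Mi.le_opNorm _) (by
                have := he (t+1) (by omega)
                nlinarith [norm_nonneg Mi])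
        _ ≤ C := by
            have h := mul_div_cancel₀ (‖Mi‖ * ε₁) hθ0.ne'
            rw [hC]
            nlinarith [h]
  intro t
  have h1 : xhat t - xstar t = Mc (Mi (xhat t - xstar t)) := by
    simp [hMc, hMi]
  calc ‖xhat t - xstar t‖ = ‖Mc (Mi (xhat t - xstar t))‖ := by rw [← h1]
    _ ≤ ‖Mc‖ * ‖Mi (xhat t - xstar t)‖ := Mc.le_opNorm _
    _ ≤ ‖Mc‖ * C := by gcongr; exact key t
    _ = κ * ε₁ / (1 - ‖θ‖) := by rw [hκ, hC]; ring
end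

section
/- (Transformer Filter approximates the Kalman Filter) Let the Kalman Filter generate x̂*_t = (A − LC) x̂*_{t−1} + L y_{t−1} with x̂*_0 = x_0, and let the Transformer Filter generate x̂_t = Σ_{i=t−H+1}^{t} α_{i,t} x̃_i, where x̃_i = (A − LC) x̂_{i−1} + L y_{i−1} (with x̂_0 = x̃_0 = x_0 and x̂_i, y_i = 0 for i < 0), and α_{i,t} = exp(−β‖x̃_i − x̃_t‖²) / Σ_{j=t−H+1}^{t} exp(−β‖x̃_j − x̃_t‖²). Suppose A − LC = MθM^{−1} with ‖θ‖ < 1, and let κ = ‖M‖‖M^{−1}‖. Then for every ε > 0, if β ≥ H²κ² / (2e(1−‖θ‖)²ε²), we have ‖x̂_t − x̂*_t‖ ≤ ε for all t ≥ 0. -/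
open Finset in
private lemma softmax_dev_bound {E : Type*} [NormedAddCommGroup E] [NormedSpace ℝ E]
    (s : Finset ℤ) (x : ℤ → E) (t : ℤ) (β c : ℝ)
    (hts : t ∈ s)
    (hA : ∀ d : ℝ, 0 ≤ d → Real.exp (-β * d ^ 2) * d ≤ c) :
    ‖(∑ i ∈ s, (Real.exp (-β * ‖x i - x t‖ ^ 2) /
        ∑ j ∈ s, Real.exp (-β * ‖x j - x t‖ ^ 2)) • x i) - x t‖ ≤ s.card * c := by
  set S : ℝ := ∑ j ∈ s, Real.exp (-β * ‖x j - x t‖ ^ 2) with hS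
  have hS1 : (1:ℝ) ≤ S := by
    have h1 : Real.exp (-β * ‖x t - x t‖ ^ 2) = 1 := by simp
    calc (1:ℝ) = Real.exp (-β * ‖x t - x t‖ ^ 2) := h1.symm
      _ ≤ S := Finset.single_le_sum
          (f := fun j => Real.exp (-β * ‖x j - x t‖ ^ 2))
          (fun j _ => (Real.exp_pos _).le) hts
  have hSpos : (0:ℝ) < S := lt_of_lt_of_le one_pos hS1
  have hsum1 : ∑ i ∈ s, Real.exp (-β * ‖x i - x t‖ ^ 2) / S = 1 := by
    rw [← Finset.sum_div, ← hS, div_self (ne_of_gt hSpos)]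
  have heq : (∑ i ∈ s, (Real.exp (-β * ‖x i - x t‖ ^ 2) / S) • x i) - x t =
      ∑ i ∈ s, (Real.exp (-β * ‖x i - x t‖ ^ 2) / S) • (x i - x t) := by
    symm
    calc ∑ i ∈ s, (Real.exp (-β * ‖x i - x t‖ ^ 2) / S) • (x i - x t)
        = ∑ i ∈ s, ((Real.exp (-β * ‖x i - x t‖ ^ 2) / S) • x i -
            (Real.exp (-β * ‖x i - x t‖ ^ 2) / S) • x t) :=
          Finset.sum_congr rfl (fun i _ => smul_sub _ _ _)
      _ = (∑ i ∈ s, (Real.exp (-β * ‖x i - x t‖ ^ 2) / S) • x i) -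
            ∑ i ∈ s, (Real.exp (-β * ‖x i - x t‖ ^ 2) / S) • x t :=
          Finset.sum_sub_distrib _ _
      _ = (∑ i ∈ s, (Real.exp (-β * ‖x i - x t‖ ^ 2) / S) • x i) -
            (∑ i ∈ s, Real.exp (-β * ‖x i - x t‖ ^ 2) / S) • x t := by
          rw [Finset.sum_smul]
      _ = _ := by rw [hsum1, one_smul]
  rw [heq]
  calc ‖∑ i ∈ s, (Real.exp (-β * ‖x i - x t‖ ^ 2) / S) • (x i - x t)‖
      ≤ ∑ i ∈ s, ‖(Real.exp (-β * ‖x i - x t‖ ^ 2) / S) • (x i - x t)‖ :=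
        norm_sum_le _ _
    _ ≤ ∑ _i ∈ s, c := by
        apply Finset.sum_le_sum
        intro i _
        rw [norm_smul]
        have hw : 0 ≤ Real.exp (-β * ‖x i - x t‖ ^ 2) / S :=
          div_nonneg (Real.exp_nonneg _) hSpos.le
        rw [Real.norm_eq_abs, abs_of_nonneg hw]
        calc Real.exp (-β * ‖x i - x t‖ ^ 2) / S * ‖x i - x t‖
            ≤ Real.exp (-β * ‖x i - x t‖ ^ 2) * ‖x i - x t‖ := by
              apply mul_le_mul_of_nonneg_right _ (norm_nonneg _)
              exact div_le_self (Real.exp_nonneg _) hS1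
          _ ≤ c := hA _ (norm_nonneg _)
    _ = s.card * c := by rw [Finset.sum_const, nsmul_eq_mul]


open Finset in
/-- The Transformer Filter approximates the Kalman Filter: with Gaussian softmax weights
of temperature `β ≥ H²κ²/(2e(1−‖θ‖)²ε²)`, the Transformer Filter estimates stay
`ε`-close to the Kalman Filter estimates, uniformly in time. -/
theorem stmt8 {n p : ℕ}
    (A : EuclideanSpace ℝ (Fin n) →L[ℝ] EuclideanSpace ℝ (Fin n))
    (C : EuclideanSpace ℝ (Fin n) →L[ℝ] EuclideanSpace ℝ (Fin p))
    (L : EuclideanSpace ℝ (Fin p) →L[ℝ] EuclideanSpace ℝ (Fin n))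
    (M : EuclideanSpace ℝ (Fin n) ≃L[ℝ] EuclideanSpace ℝ (Fin n))
    (θ : EuclideanSpace ℝ (Fin n) →L[ℝ] EuclideanSpace ℝ (Fin n))
    (hF : A - L.comp C =
      (M : EuclideanSpace ℝ (Fin n) →L[ℝ] EuclideanSpace ℝ (Fin n)).comp
        (θ.comp (M.symm : EuclideanSpace ℝ (Fin n) →L[ℝ] EuclideanSpace ℝ (Fin n))))
    (hθ : ‖θ‖ < 1)
    (κ : ℝ)
    (hκ : κ = ‖(M : EuclideanSpace ℝ (Fin n) →L[ℝ] EuclideanSpace ℝ (Fin n))‖ *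
        ‖(M.symm : EuclideanSpace ℝ (Fin n) →L[ℝ] EuclideanSpace ℝ (Fin n))‖)
    (H : ℕ) (hH : 1 ≤ H) (β : ℝ)
    (x0 : EuclideanSpace ℝ (Fin n))
    (y : ℤ → EuclideanSpace ℝ (Fin p))
    (xstar xtilde xhat : ℤ → EuclideanSpace ℝ (Fin n))
    -- convention: `x̂_i = 0` and `y_i = 0` for `i < 0`, hence also `x̃_i = 0` for `i < 0`
    (hyneg : ∀ i : ℤ, i < 0 → y i = 0)
    (hhatneg : ∀ i : ℤ, i < 0 → xhat i = 0)
    (htildeneg : ∀ i : ℤ, i < 0 → xtilde i = 0)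
    -- initializations
    (hstar0 : xstar 0 = x0) (hhat0 : xhat 0 = x0) (htilde0 : xtilde 0 = x0)
    -- Kalman Filter recursion
    (hstar : ∀ t : ℤ, 1 ≤ t → xstar t = (A - L.comp C) (xstar (t - 1)) + L (y (t - 1)))
    -- interpolating estimates
    (htilde : ∀ i : ℤ, 1 ≤ i → xtilde i = (A - L.comp C) (xhat (i - 1)) + L (y (i - 1)))
    -- Transformer Filter: softmax-weighted average over the window of length `H`
    (hhat : ∀ t : ℤ, 1 ≤ t →
      xhat t = ∑ i ∈ Icc (t - (H : ℤ) + 1) t,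
        (Real.exp (-β * ‖xtilde i - xtilde t‖ ^ 2) /
          ∑ j ∈ Icc (t - (H : ℤ) + 1) t, Real.exp (-β * ‖xtilde j - xtilde t‖ ^ 2)) •
          xtilde i)
    (ε : ℝ) (hε : 0 < ε)
    (hβ : β ≥ (H : ℝ) ^ 2 * κ ^ 2 / (2 * Real.exp 1 * (1 - ‖θ‖) ^ 2 * ε ^ 2)) :
    ∀ t : ℤ, 0 ≤ t → ‖xhat t - xstar t‖ ≤ ε := by
  -- trivial case n = 0
  rcases Nat.eq_zero_or_pos n with hn | hn
  · subst hn
    haveI : Subsingleton (EuclideanSpace ℝ (Fin 0)) :=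
      ⟨fun a b => PiLp.ext fun i => i.elim0⟩
    intro t ht
    have : xhat t - xstar t = 0 := Subsingleton.elim _ _
    rw [this, norm_zero]; exact hε.le
  -- main case
  haveI : Nontrivial (EuclideanSpace ℝ (Fin n)) := by
    obtain ⟨m, rfl⟩ := Nat.exists_eq_succ_of_ne_zero hn.ne'
    infer_instance
  have hθ0 : (0:ℝ) ≤ ‖θ‖ := norm_nonneg _
  have h1θ : (0:ℝ) < 1 - ‖θ‖ := by linarith
  have hHpos : (0:ℝ) < H := by exact_mod_cast hH
  have hκ1 : (1:ℝ) ≤ κ := by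
    rw [hκ]
    calc (1:ℝ) = ‖ContinuousLinearMap.id ℝ (EuclideanSpace ℝ (Fin n))‖ :=
          (ContinuousLinearMap.norm_id).symm
      _ = ‖(M : EuclideanSpace ℝ (Fin n) →L[ℝ] EuclideanSpace ℝ (Fin n)).comp
            (M.symm : EuclideanSpace ℝ (Fin n) →L[ℝ] EuclideanSpace ℝ (Fin n))‖ := by
          rw [ContinuousLinearEquiv.coe_comp_coe_symm]
      _ ≤ _ := ContinuousLinearMap.opNorm_comp_le _ _
  have hκ0 : (0:ℝ) < κ := lt_of_lt_of_le one_pos hκ1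
  have hepos : (0:ℝ) < Real.exp 1 := Real.exp_pos 1
  have hβpos : (0:ℝ) < β := by
    refine lt_of_lt_of_le ?_ hβ
    have h1 : (0:ℝ) < (H:ℝ)^2 * κ^2 := by positivity
    have h2 : (0:ℝ) < 2 * Real.exp 1 * (1 - ‖θ‖)^2 * ε^2 := by positivity
    positivity
  set c : ℝ := (Real.sqrt (2 * β * Real.exp 1))⁻¹ with hc_def
  have h2βe : (0:ℝ) < 2 * β * Real.exp 1 := by positivity
  have hcpos : 0 < c := by positivity
  -- Lemma A: d * exp(-β d²) ≤ c for d ≥ 0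
  have keyA : ∀ d : ℝ, 0 ≤ d → Real.exp (-β * d^2) * d ≤ c := by
    intro d hd
    have key : ∀ x : ℝ, x * Real.exp (-x) ≤ Real.exp (-1) := by
      intro x
      have h1 : x ≤ Real.exp (x - 1) := by
        have := Real.add_one_le_exp (x - 1); linarith
      calc x * Real.exp (-x) ≤ Real.exp (x-1) * Real.exp (-x) := by
            apply mul_le_mul_of_nonneg_right h1 (Real.exp_nonneg _)
        _ = Real.exp (-1) := by rw [← Real.exp_add]; ring_nf
    have hsq : (Real.exp (-β * d^2) * d)^2 ≤ (2 * β * Real.exp 1)⁻¹ := by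
      have hE : Real.exp (-β * d^2) ^ 2 = Real.exp (-(2 * β * d^2)) := by
        rw [← Real.exp_nat_mul]; norm_num; ring_nf
      have hx := key (2 * β * d^2)
      have hexp1 : Real.exp (-1) = (Real.exp 1)⁻¹ := by
        rw [Real.exp_neg]
      rw [mul_pow, hE]
      rw [hexp1] at hx
      rw [inv_eq_one_div, le_div_iff₀ h2βe]
      have hβ2 : (0:ℝ) < 2 * β := by positivity
      calc Real.exp (-(2 * β * d^2)) * d^2 * (2 * β * Real.exp 1)
          = ((2 * β * d^2) * Real.exp (-(2 * β * d^2))) * Real.exp 1 := by ring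
        _ ≤ (Real.exp 1)⁻¹ * Real.exp 1 := by
            apply mul_le_mul_of_nonneg_right hx (Real.exp_nonneg _)
        _ = 1 := inv_mul_cancel₀ (ne_of_gt hepos)
    calc Real.exp (-β * d^2) * d
        = Real.sqrt ((Real.exp (-β * d^2) * d)^2) := by
          rw [Real.sqrt_sq (by positivity)]
      _ ≤ Real.sqrt ((2 * β * Real.exp 1)⁻¹) := Real.sqrt_le_sqrt hsq
      _ = c := Real.sqrt_inv _
  -- Lemma B: ‖xhat t - xtilde t‖ ≤ H * c for t ≥ 1
  have keyB : ∀ t : ℤ, 1 ≤ t → ‖xhat t - xtilde t‖ ≤ H * c := by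
    intro t ht
    have hts : t ∈ Finset.Icc (t - (H:ℤ) + 1) t := by
      rw [Finset.mem_Icc]
      have : (1:ℤ) ≤ (H:ℤ) := by exact_mod_cast hH
      omega
    have hcard : (Finset.Icc (t - (H:ℤ) + 1) t).card = H := by
      rw [Int.card_Icc]
      have h4 : t + 1 - (t - (H:ℤ) + 1) = (H:ℤ) := by ring
      rw [h4]; simp
    have hb := softmax_dev_bound (Finset.Icc (t - (H:ℤ) + 1) t) xtilde t β c hts keyA
    rw [hcard] at hb
    rw [hhat t ht]
    exact hb
  -- key conjugation fact
  have hMF : ∀ v, M.symm ((A - L.comp C) v) = θ (M.symm v) := by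
    intro v
    rw [hF]
    simp
  set Bu : ℝ := ‖(M.symm : EuclideanSpace ℝ (Fin n) →L[ℝ] EuclideanSpace ℝ (Fin n))‖
      * (H * c) / (1 - ‖θ‖) with hBu
  have hBu0 : 0 ≤ Bu := by
    rw [hBu]
    have := norm_nonneg (M.symm : EuclideanSpace ℝ (Fin n) →L[ℝ] EuclideanSpace ℝ (Fin n))
    positivity
  -- induction: ‖M.symm (xhat t - xstar t)‖ ≤ Bu
  have keyC : ∀ t : ℕ, ‖M.symm (xhat (t:ℤ) - xstar (t:ℤ))‖ ≤ Bu := by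
    intro t
    induction t with
    | zero =>
      simp only [Int.ofNat_zero, Nat.cast_zero]
      rw [hhat0, hstar0, sub_self, map_zero, norm_zero]
      exact hBu0
    | succ k ih =>
      have hk1 : (1:ℤ) ≤ (k:ℤ) + 1 := by omega
      have hcast : ((k+1 : ℕ):ℤ) = (k:ℤ) + 1 := by push_cast; ring
      rw [hcast]
      have hsub : ((k:ℤ) + 1) - 1 = (k:ℤ) := by ring
      have hdecomp : xhat ((k:ℤ)+1) - xstar ((k:ℤ)+1) =
          (xhat ((k:ℤ)+1) - xtilde ((k:ℤ)+1)) +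
          (A - L.comp C) (xhat (k:ℤ) - xstar (k:ℤ)) := by
        rw [htilde _ hk1, hstar _ hk1, hsub, map_sub]
        abel
      rw [hdecomp, map_add]
      calc ‖M.symm (xhat ((k:ℤ)+1) - xtilde ((k:ℤ)+1)) +
            M.symm ((A - L.comp C) (xhat (k:ℤ) - xstar (k:ℤ)))‖
          ≤ ‖M.symm (xhat ((k:ℤ)+1) - xtilde ((k:ℤ)+1))‖ +
            ‖M.symm ((A - L.comp C) (xhat (k:ℤ) - xstar (k:ℤ)))‖ := norm_add_le _ _
        _ ≤ ‖(M.symm : EuclideanSpace ℝ (Fin n) →L[ℝ] EuclideanSpace ℝ (Fin n))‖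
              * (H * c) + ‖θ‖ * Bu := by
            apply add_le_add
            · calc ‖M.symm (xhat ((k:ℤ)+1) - xtilde ((k:ℤ)+1))‖
                  ≤ ‖(M.symm : EuclideanSpace ℝ (Fin n) →L[ℝ] EuclideanSpace ℝ (Fin n))‖
                    * ‖xhat ((k:ℤ)+1) - xtilde ((k:ℤ)+1)‖ :=
                    (M.symm : EuclideanSpace ℝ (Fin n) →L[ℝ] EuclideanSpace ℝ (Fin n)).le_opNorm _
                _ ≤ _ := by
                    apply mul_le_mul_of_nonneg_left (keyB _ hk1) (norm_nonneg _)
            · rw [hMF]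
              calc ‖θ (M.symm (xhat (k:ℤ) - xstar (k:ℤ)))‖
                  ≤ ‖θ‖ * ‖M.symm (xhat (k:ℤ) - xstar (k:ℤ))‖ := θ.le_opNorm _
                _ ≤ ‖θ‖ * Bu := mul_le_mul_of_nonneg_left ih hθ0
        _ ≤ Bu := by
            have hkey : Bu * (1 - ‖θ‖) =
                ‖(M.symm : EuclideanSpace ℝ (Fin n) →L[ℝ] EuclideanSpace ℝ (Fin n))‖
                  * ((H:ℝ) * c) := by
              rw [hBu]; exact div_mul_cancel₀ _ (ne_of_gt h1θ)
            have : ‖(M.symm : EuclideanSpace ℝ (Fin n) →L[ℝ] EuclideanSpace ℝ (Fin n))‖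
                * ((H:ℝ) * c) + ‖θ‖ * Bu = Bu := by rw [← hkey]; ring
            linarith [this.le]
  -- final bound on c
  have hcbound : κ * ((H:ℝ) * c) / (1 - ‖θ‖) ≤ ε := by
    have hq : (0:ℝ) < (H:ℝ) * κ / ((1 - ‖θ‖) * ε) := by positivity
    have hsq : ((H:ℝ) * κ / ((1 - ‖θ‖) * ε))^2 ≤ 2 * β * Real.exp 1 := by
      rw [div_pow, div_le_iff₀ (by positivity)]
      rw [ge_iff_le, div_le_iff₀ (by positivity)] at hβ
      calc ((H:ℝ)*κ)^2 = (H:ℝ)^2*κ^2 := by ring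
        _ ≤ β * (2*Real.exp 1*(1-‖θ‖)^2*ε^2) := hβ
        _ = 2*β*Real.exp 1 * ((1-‖θ‖)*ε)^2 := by ring
    have hsqrt : (H:ℝ) * κ / ((1 - ‖θ‖) * ε) ≤ Real.sqrt (2 * β * Real.exp 1) := by
      calc (H:ℝ) * κ / ((1 - ‖θ‖) * ε)
          = Real.sqrt (((H:ℝ) * κ / ((1 - ‖θ‖) * ε))^2) := (Real.sqrt_sq hq.le).symm
        _ ≤ _ := Real.sqrt_le_sqrt hsq
    have hcle : c ≤ ((1 - ‖θ‖) * ε) / ((H:ℝ) * κ) := by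
      rw [hc_def]
      calc (Real.sqrt (2 * β * Real.exp 1))⁻¹
          ≤ (((H:ℝ) * κ) / ((1 - ‖θ‖) * ε))⁻¹ := inv_anti₀ hq hsqrt
        _ = ((1 - ‖θ‖) * ε) / ((H:ℝ) * κ) := by rw [inv_div]
    rw [div_le_iff₀ h1θ]
    calc κ * ((H:ℝ) * c) ≤ κ * ((H:ℝ) * (((1 - ‖θ‖) * ε) / ((H:ℝ) * κ))) := by
          apply mul_le_mul_of_nonneg_left _ hκ0.le
          exact mul_le_mul_of_nonneg_left hcle hHpos.le
      _ = ε * (1 - ‖θ‖) := by field_simp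
  -- conclude
  intro t ht
  obtain ⟨m, rfl⟩ : ∃ m : ℕ, t = (m:ℤ) := ⟨t.toNat, (Int.toNat_of_nonneg ht).symm⟩
  have hrec : xhat (m:ℤ) - xstar (m:ℤ) = M (M.symm (xhat (m:ℤ) - xstar (m:ℤ))) :=
    (M.apply_symm_apply _).symm
  rw [hrec]
  calc ‖M (M.symm (xhat (m:ℤ) - xstar (m:ℤ)))‖
      ≤ ‖(M : EuclideanSpace ℝ (Fin n) →L[ℝ] EuclideanSpace ℝ (Fin n))‖ *
        ‖M.symm (xhat (m:ℤ) - xstar (m:ℤ))‖ :=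
        (M : EuclideanSpace ℝ (Fin n) →L[ℝ] EuclideanSpace ℝ (Fin n)).le_opNorm _
    _ ≤ ‖(M : EuclideanSpace ℝ (Fin n) →L[ℝ] EuclideanSpace ℝ (Fin n))‖ * Bu :=
        mul_le_mul_of_nonneg_left (keyC m) (norm_nonneg _)
    _ = κ * ((H:ℝ) * c) / (1 - ‖θ‖) := by rw [hBu, hκ]; ring
    _ ≤ ε := hcbound
end
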